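/- Let Y ∈ B(H,K) be a Hilbert–Schmidt operator and E the spectral measure of a normal operator on K. Then the E-norm of Y is bounded by its Hilbert–Schmidt norm: ‖Y‖_E ≤ ‖Y‖₂, where ‖Y‖_E = (sup_{⟨Ω_k⟩} Σ_k ‖Y* E(Ω_k) Y‖)^{1/2} with the supremum over finite families of pairwise disjoint Borel subsets of ℂ. -/

import Mathlib

open Set Complex Filter
open scoped InnerProductSpace Topology Classical

noncomputable section

variable {H K : Type*}
  [NormedAddCommGroup H] [InnerProductSpace ℂ H] [CompleteSpace H]
  [NormedAddCommGroup K] [InnerProductSpace ℂ K] [CompleteSpace K]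

/-- A projection-valued (spectral) measure on the Borel subsets of `ℂ`,
acting on the Hilbert space `K`. -/
structure SpectralMeasure (K : Type*) [NormedAddCommGroup K] [InnerProductSpace ℂ K]
    [CompleteSpace K] where
  proj : Set ℂ → K →L[ℂ] K
  selfAdjoint : ∀ {Ω : Set ℂ}, MeasurableSet Ω → IsSelfAdjoint (proj Ω)
  mul_inter : ∀ {Ω Ω' : Set ℂ}, MeasurableSet Ω → MeasurableSet Ω' →
    proj (Ω ∩ Ω') = (proj Ω).comp (proj Ω')
  add_union : ∀ {Ω Ω' : Set ℂ}, MeasurableSet Ω → MeasurableSet Ω' → Disjoint Ω Ω' →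
    proj (Ω ∪ Ω') = proj Ω + proj Ω'
  proj_univ : proj Set.univ = 1

/-- The spectral function `Ê(λ,μ) = E({x+iy : x < λ, y < μ})`. -/
def SpectralMeasure.hatE (E : SpectralMeasure K) (l m : ℝ) : K →L[ℂ] K :=
  E.proj {z : ℂ | z.re < l ∧ z.im < m}

/-- The half-open rectangle `[l,l') × i[m,m')` in `ℂ`. -/
def rectC (l l' m m' : ℝ) : Set ℂ :=
  {z : ℂ | l ≤ z.re ∧ z.re < l' ∧ m ≤ z.im ∧ z.im < m'}

/-- A tagged partition of the half-open interval `[a,b)` into half-open subintervals,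
with a sample point (tag) in each subinterval. -/
structure TaggedPartition (a b : ℝ) where
  n : ℕ
  npos : 0 < n
  pts : ℕ → ℝ
  tags : ℕ → ℝ
  mono : ∀ i < n, pts i < pts (i + 1)
  first : pts 0 = a
  last : pts n = b
  tag_mem : ∀ i < n, pts i ≤ tags i ∧ tags i < pts (i + 1)

/-- The mesh (maximal subinterval length) of a tagged partition. -/
def TaggedPartition.mesh {a b : ℝ} (P : TaggedPartition a b) : ℝ :=
  sSup {r : ℝ | ∃ i < P.n, r = P.pts (i + 1) - P.pts i}

/-- The Riemann–Stieltjes sum `Σ_j Σ_k F(ξ_j,ζ_k) E(δ_j × ω_k)` for the right integral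
`∫ F dE` over the rectangle `[a,b) × [c,d)`. -/
def rightSum (E : SpectralMeasure K) (F : ℝ → ℝ → (K →L[ℂ] H))
    {a b c d : ℝ} (P : TaggedPartition a b) (Q : TaggedPartition c d) : K →L[ℂ] H :=
  ∑ j ∈ Finset.range P.n, ∑ k ∈ Finset.range Q.n,
    (F (P.tags j) (Q.tags k)).comp
      (E.proj (rectC (P.pts j) (P.pts (j + 1)) (Q.pts k) (Q.pts (k + 1))))

/-- The Riemann–Stieltjes sum `Σ_j Σ_k E(δ_j × ω_k) G(ξ_j,ζ_k)` for the left integral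
`∫ dE G` over the rectangle `[a,b) × [c,d)`. -/
def leftSum (E : SpectralMeasure K) (G : ℝ → ℝ → (H →L[ℂ] K))
    {a b c d : ℝ} (P : TaggedPartition a b) (Q : TaggedPartition c d) : H →L[ℂ] K :=
  ∑ j ∈ Finset.range P.n, ∑ k ∈ Finset.range Q.n,
    (E.proj (rectC (P.pts j) (P.pts (j + 1)) (Q.pts k) (Q.pts (k + 1)))).comp
      (G (P.tags j) (Q.tags k))

/-- `F` is right-integrable w.r.t. `dE` on `[a,b) × [c,d)` in the uniform operator
topology, with integral `J`. -/
def HasRightIntegralUnif (E : SpectralMeasure K) (F : ℝ → ℝ → (K →L[ℂ] H))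
    (a b c d : ℝ) (J : K →L[ℂ] H) : Prop :=
  ∀ ε > 0, ∃ δ > 0, ∀ (P : TaggedPartition a b) (Q : TaggedPartition c d),
    P.mesh < δ → Q.mesh < δ → ‖rightSum E F P Q - J‖ < ε

/-- `F` is right-integrable in the strong operator topology. -/
def HasRightIntegralStrong (E : SpectralMeasure K) (F : ℝ → ℝ → (K →L[ℂ] H))
    (a b c d : ℝ) (J : K →L[ℂ] H) : Prop :=
  ∀ x : K, ∀ ε > 0, ∃ δ > 0, ∀ (P : TaggedPartition a b) (Q : TaggedPartition c d),
    P.mesh < δ → Q.mesh < δ → ‖rightSum E F P Q x - J x‖ < ε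

/-- `F` is right-integrable in the weak operator topology. -/
def HasRightIntegralWeak (E : SpectralMeasure K) (F : ℝ → ℝ → (K →L[ℂ] H))
    (a b c d : ℝ) (J : K →L[ℂ] H) : Prop :=
  ∀ (x : K) (y : H), ∀ ε > 0, ∃ δ > 0, ∀ (P : TaggedPartition a b) (Q : TaggedPartition c d),
    P.mesh < δ → Q.mesh < δ → ‖⟪y, rightSum E F P Q x - J x⟫_ℂ‖ < ε

/-- `G` is left-integrable w.r.t. `dE` on `[a,b) × [c,d)` in the uniform operator
topology, with integral `J`. -/
def HasLeftIntegralUnif (E : SpectralMeasure K) (G : ℝ → ℝ → (H →L[ℂ] K))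
    (a b c d : ℝ) (J : H →L[ℂ] K) : Prop :=
  ∀ ε > 0, ∃ δ > 0, ∀ (P : TaggedPartition a b) (Q : TaggedPartition c d),
    P.mesh < δ → Q.mesh < δ → ‖leftSum E G P Q - J‖ < ε

/-- `G` is left-integrable in the strong operator topology. -/
def HasLeftIntegralStrong (E : SpectralMeasure K) (G : ℝ → ℝ → (H →L[ℂ] K))
    (a b c d : ℝ) (J : H →L[ℂ] K) : Prop :=
  ∀ x : H, ∀ ε > 0, ∃ δ > 0, ∀ (P : TaggedPartition a b) (Q : TaggedPartition c d),
    P.mesh < δ → Q.mesh < δ → ‖leftSum E G P Q x - J x‖ < ε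

/-- `G` is left-integrable in the weak operator topology. -/
def HasLeftIntegralWeak (E : SpectralMeasure K) (G : ℝ → ℝ → (H →L[ℂ] K))
    (a b c d : ℝ) (J : H →L[ℂ] K) : Prop :=
  ∀ (x : H) (y : K), ∀ ε > 0, ∃ δ > 0, ∀ (P : TaggedPartition a b) (Q : TaggedPartition c d),
    P.mesh < δ → Q.mesh < δ → ‖⟪y, leftSum E G P Q x - J x⟫_ℂ‖ < ε

/-- `E` is the spectral measure of the (possibly unbounded) normal operator `C`:
on the range of any spectral projection of a finite rectangle, `C` acts as the
operator Stieltjes integral `∫ z dE(z)`. -/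
def SpectralMeasure.Represents (E : SpectralMeasure K) (C : K →ₗ.[ℂ] K) : Prop :=
  ∀ a b c d : ℝ, a < b → c < d → ∀ T : K →L[ℂ] K,
    HasLeftIntegralUnif E (fun l m => ((l : ℂ) + (m : ℂ) * Complex.I) • (1 : K →L[ℂ] K))
      a b c d T →
    ∀ x : K, ∃ h : E.proj (rectC a b c d) x ∈ C.domain,
      C ⟨E.proj (rectC a b c d) x, h⟩ = T x

/-- The support of a spectral measure; for the spectral measure of a normal
operator `C` this is `spec(C)`. -/
def specSupp (E : SpectralMeasure K) : Set ℂ :=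
  {z : ℂ | ∀ ε > 0, E.proj (Metric.ball z ε) ≠ 0}

/-- The set of finite sums `Σ_k ‖Y* E(Ω_k) Y‖` over finite systems of mutually
disjoint Borel subsets of `ℂ`. -/
def EnormSet (E : SpectralMeasure K) (Y : H →L[ℂ] K) : Set ℝ :=
  {r : ℝ | ∃ (n : ℕ) (Ω : ℕ → Set ℂ), (∀ i, MeasurableSet (Ω i)) ∧
    (∀ i < n, ∀ j < n, i ≠ j → Disjoint (Ω i) (Ω j)) ∧
    r = ∑ i ∈ Finset.range n,
      ‖(ContinuousLinearMap.adjoint Y).comp ((E.proj (Ω i)).comp Y)‖}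

/-- The norm `‖Y‖_E` of `Y` with respect to the spectral measure `E`. -/
def Enorm (E : SpectralMeasure K) (Y : H →L[ℂ] K) : ℝ :=
  Real.sqrt (sSup (EnormSet E Y))

/-- `R` is the (bounded, everywhere defined) resolvent `(A - ζ)⁻¹` of the possibly
unbounded operator `A` at the point `ζ`. -/
def IsResolventAt (A : H →ₗ.[ℂ] H) (ζ : ℂ) (R : H →L[ℂ] H) : Prop :=
  ∃ hmem : ∀ x : H, R x ∈ A.domain,
    (∀ x : H, A ⟨R x, hmem x⟩ - ζ • R x = x) ∧
    (∀ f : A.domain, R (A f - ζ • (f : H)) = f)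

/-- The resolvent set of a possibly unbounded operator. -/
def pmResolventSet (A : H →ₗ.[ℂ] H) : Set ℂ := {ζ : ℂ | ∃ R, IsResolventAt A ζ R}

/-- The spectrum of a possibly unbounded operator. -/
def pmSpectrum (A : H →ₗ.[ℂ] H) : Set ℂ := (pmResolventSet A)ᶜ

/-- The numerical range `W(A) = {⟨Ax,x⟩ : x ∈ Dom(A), ‖x‖ = 1}`. -/
def numRange (A : H →ₗ.[ℂ] H) : Set ℂ :=
  {z : ℂ | ∃ f : A.domain, ‖(f : H)‖ = 1 ∧ z = ⟪(f : H), A f⟫_ℂ}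

/-- `X` is a weak solution of the Sylvester equation `XA - CX = D`. -/
def IsWeakSolutionSylvester (A : H →ₗ.[ℂ] H) (C : K →ₗ.[ℂ] K) (D X : H →L[ℂ] K) : Prop :=
  ∀ (f : A.domain) (g : C.adjoint.domain),
    ⟪(g : K), X (A f)⟫_ℂ - ⟪C.adjoint g, X (f : H)⟫_ℂ = ⟪(g : K), D (f : H)⟫_ℂ

/-- `X` is a strong solution of the Sylvester equation `XA - CX = D`. -/
def IsStrongSolutionSylvester (A : H →ₗ.[ℂ] H) (C : K →ₗ.[ℂ] K) (D X : H →L[ℂ] K) : Prop :=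
  ∀ f : A.domain, ∃ h : X (f : H) ∈ C.domain,
    X (A f) - C ⟨X (f : H), h⟩ = D (f : H)

/-- `X` is a weak solution of the Riccati equation `XA - CX + XBX = D`. -/
def IsWeakSolutionRiccati (A : H →ₗ.[ℂ] H) (C : K →ₗ.[ℂ] K) (B : K →L[ℂ] H)
    (D X : H →L[ℂ] K) : Prop :=
  ∀ (f : A.domain) (g : C.adjoint.domain),
    ⟪(g : K), X (A f)⟫_ℂ - ⟪C.adjoint g, X (f : H)⟫_ℂ
      + ⟪(g : K), X (B (X (f : H)))⟫_ℂ = ⟪(g : K), D (f : H)⟫_ℂ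

/-- `X` is a strong solution of the Riccati equation `XA - CX + XBX = D`. -/
def IsStrongSolutionRiccati (A : H →ₗ.[ℂ] H) (C : K →ₗ.[ℂ] K) (B : K →L[ℂ] H)
    (D X : H →L[ℂ] K) : Prop :=
  ∀ f : A.domain, ∃ h : X (f : H) ∈ C.domain,
    X (A f) - C ⟨X (f : H), h⟩ + X (B (X (f : H))) = D (f : H)

/-- The Riemann–Stieltjes sum for the left integral `∫_{spec(C) ∩ Ω} dE(ζ) G(ζ)`:
only partition rectangles meeting the spectrum contribute, with tags `tag j k`
chosen per rectangle. -/
def specLeftSum (E : SpectralMeasure K) (G : ℂ → (H →L[ℂ] K))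
    {a b c d : ℝ} (P : TaggedPartition a b) (Q : TaggedPartition c d)
    (tag : ℕ → ℕ → ℂ) : H →L[ℂ] K :=
  ∑ j ∈ Finset.range P.n, ∑ k ∈ Finset.range Q.n,
    if (rectC (P.pts j) (P.pts (j + 1)) (Q.pts k) (Q.pts (k + 1)) ∩ specSupp E).Nonempty
    then (E.proj (rectC (P.pts j) (P.pts (j + 1)) (Q.pts k) (Q.pts (k + 1)))).comp
      (G (tag j k))
    else 0

/-- Admissible tags for a spectral Riemann–Stieltjes sum: whenever a partition
rectangle meets the spectrum, the tag is taken in the intersection. -/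
def ValidTags (E : SpectralMeasure K) {a b c d : ℝ}
    (P : TaggedPartition a b) (Q : TaggedPartition c d) (tag : ℕ → ℕ → ℂ) : Prop :=
  ∀ j < P.n, ∀ k < Q.n,
    (rectC (P.pts j) (P.pts (j + 1)) (Q.pts k) (Q.pts (k + 1)) ∩ specSupp E).Nonempty →
    tag j k ∈ rectC (P.pts j) (P.pts (j + 1)) (Q.pts k) (Q.pts (k + 1)) ∩ specSupp E

/-- Convergence of `∫_{spec(C) ∩ ([a,b)×i[c,d))} dE(ζ) G(ζ)` in the strong operator
topology. -/
def HasSpecLeftIntegralStrong (E : SpectralMeasure K) (G : ℂ → (H →L[ℂ] K))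
    (a b c d : ℝ) (J : H →L[ℂ] K) : Prop :=
  ∀ x : H, ∀ ε > 0, ∃ δ > 0, ∀ (P : TaggedPartition a b) (Q : TaggedPartition c d)
    (tag : ℕ → ℕ → ℂ), ValidTags E P Q tag → P.mesh < δ → Q.mesh < δ →
    ‖specLeftSum E G P Q tag x - J x‖ < ε

/-- Convergence of `∫_{spec(C) ∩ ([a,b)×i[c,d))} dE(ζ) G(ζ)` in the uniform operator
topology. -/
def HasSpecLeftIntegralUnif (E : SpectralMeasure K) (G : ℂ → (H →L[ℂ] K))
    (a b c d : ℝ) (J : H →L[ℂ] K) : Prop :=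
  ∀ ε > 0, ∃ δ > 0, ∀ (P : TaggedPartition a b) (Q : TaggedPartition c d)
    (tag : ℕ → ℕ → ℂ), ValidTags E P Q tag → P.mesh < δ → Q.mesh < δ →
    ‖specLeftSum E G P Q tag - J‖ < ε

/-- The improper integral `∫_{spec(C)} dE(ζ) G(ζ)` in the strong operator topology:
the strong limit, over exhausting finite rectangles, of the integrals over
`spec(C) ∩ ([a,b) × i[c,d))`. -/
def HasImproperSpecLeftIntegralStrong (E : SpectralMeasure K) (G : ℂ → (H →L[ℂ] K))
    (J : H →L[ℂ] K) : Prop :=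
  ∃ Jr : ℝ → ℝ → ℝ → ℝ → (H →L[ℂ] K),
    (∀ a b c d : ℝ, a < b → c < d → HasSpecLeftIntegralStrong E G a b c d (Jr a b c d)) ∧
    ∀ x : H, ∀ ε > 0, ∃ R : ℝ, ∀ a b c d : ℝ, a ≤ -R → R ≤ b → c ≤ -R → R ≤ d →
      ‖Jr a b c d x - J x‖ < ε

/-- The improper integral `∫_{spec(C)} dE(ζ) G(ζ)` in the uniform operator topology. -/
def HasImproperSpecLeftIntegralUnif (E : SpectralMeasure K) (G : ℂ → (H →L[ℂ] K))
    (J : H →L[ℂ] K) : Prop :=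
  ∃ Jr : ℝ → ℝ → ℝ → ℝ → (H →L[ℂ] K),
    (∀ a b c d : ℝ, a < b → c < d → HasSpecLeftIntegralUnif E G a b c d (Jr a b c d)) ∧
    ∀ ε > 0, ∃ R : ℝ, ∀ a b c d : ℝ, a ≤ -R → R ≤ b → c ≤ -R → R ≤ d →
      ‖Jr a b c d - J‖ < ε

/-- The improper left integral `∫_{ℝ²} dE G` (uniform operator topology) as a limit
over exhausting finite rectangles. -/
def HasImproperLeftIntegralUnif (E : SpectralMeasure K) (G : ℝ → ℝ → (H →L[ℂ] K))
    (J : H →L[ℂ] K) : Prop :=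
  ∃ Jr : ℝ → ℝ → ℝ → ℝ → (H →L[ℂ] K),
    (∀ a b c d : ℝ, a < b → c < d → HasLeftIntegralUnif E G a b c d (Jr a b c d)) ∧
    ∀ ε > 0, ∃ R : ℝ, ∀ a b c d : ℝ, a ≤ -R → R ≤ b → c ≤ -R → R ≤ d →
      ‖Jr a b c d - J‖ < ε

section AuxEnorm

open ContinuousLinearMap

lemma SpectralMeasure.proj_empty' (E : SpectralMeasure K) : E.proj ∅ = 0 := by
  have h := E.add_union (Ω := ∅) (Ω' := ∅) MeasurableSet.empty MeasurableSet.empty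
    (disjoint_bot_left)
  rw [Set.union_empty] at h
  exact (left_eq_add.mp h)

lemma SpectralMeasure.proj_idem' (E : SpectralMeasure K) {Ω : Set ℂ} (hΩ : MeasurableSet Ω) :
    (E.proj Ω).comp (E.proj Ω) = E.proj Ω := by
  rw [← E.mul_inter hΩ hΩ, Set.inter_self]

lemma SpectralMeasure.inner_proj_eq (E : SpectralMeasure K) {Ω : Set ℂ}
    (hΩ : MeasurableSet Ω) (x : K) :
    (⟪x, E.proj Ω x⟫_ℂ).re = ‖E.proj Ω x‖ ^ 2 := by
  set P := E.proj Ω with hP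
  have hsa : ContinuousLinearMap.adjoint P = P :=
    ContinuousLinearMap.isSelfAdjoint_iff'.mp (E.selfAdjoint hΩ)
  have hPP : P (P x) = P x := by
    have := E.proj_idem' hΩ
    calc P (P x) = (P.comp P) x := rfl
    _ = P x := by rw [this]
  have key := ContinuousLinearMap.adjoint_inner_right P x (P x)
  rw [hsa, hPP] at key
  rw [key]
  exact inner_self_eq_norm_sq (𝕜 := ℂ) (P x)

lemma SpectralMeasure.norm_proj_apply_le (E : SpectralMeasure K) {Ω : Set ℂ}
    (hΩ : MeasurableSet Ω) (x : K) : ‖E.proj Ω x‖ ≤ ‖x‖ := by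
  have h1 : ‖E.proj Ω x‖ ^ 2 = (⟪x, E.proj Ω x⟫_ℂ).re := (E.inner_proj_eq hΩ x).symm
  have h2 : (⟪x, E.proj Ω x⟫_ℂ).re ≤ ‖x‖ * ‖E.proj Ω x‖ := by
    calc (⟪x, E.proj Ω x⟫_ℂ).re ≤ ‖⟪x, E.proj Ω x⟫_ℂ‖ := Complex.re_le_norm _
    _ ≤ ‖x‖ * ‖E.proj Ω x‖ := norm_inner_le_norm _ _
  nlinarith [norm_nonneg (E.proj Ω x), norm_nonneg x]

lemma SpectralMeasure.proj_biUnion (E : SpectralMeasure K) (Ω : ℕ → Set ℂ)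
    (hm : ∀ i, MeasurableSet (Ω i)) (n : ℕ)
    (hd : ∀ i < n, ∀ j < n, i ≠ j → Disjoint (Ω i) (Ω j)) :
    E.proj (⋃ i ∈ Finset.range n, Ω i) = ∑ i ∈ Finset.range n, E.proj (Ω i) := by
  induction n with
  | zero => simp [E.proj_empty']
  | succ n ih =>
    have hU : (⋃ i ∈ Finset.range (n + 1), Ω i)
        = (⋃ i ∈ Finset.range n, Ω i) ∪ Ω n := by
      rw [Finset.range_add_one]
      simp [Set.biUnion_insert, Set.union_comm]
    have hmU : MeasurableSet (⋃ i ∈ Finset.range n, Ω i) :=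
      (Finset.range n).measurableSet_biUnion (fun i _ => hm i)
    have hdisj : Disjoint (⋃ i ∈ Finset.range n, Ω i) (Ω n) := by
      rw [Set.disjoint_iUnion_left]
      intro i
      rw [Set.disjoint_iUnion_left]
      intro hi
      exact hd i (Finset.mem_range.mp hi |>.trans (Nat.lt_succ_self n)) n
        (Nat.lt_succ_self n) (Nat.ne_of_lt (Finset.mem_range.mp hi))
    rw [hU, E.add_union hmU (hm n) hdisj,
      ih (fun i hi j hj hij => hd i (hi.trans (Nat.lt_succ_self n))
        j (hj.trans (Nat.lt_succ_self n)) hij),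
      Finset.sum_range_succ]

lemma SpectralMeasure.sum_norm_proj_sq_le (E : SpectralMeasure K) (Ω : ℕ → Set ℂ)
    (hm : ∀ i, MeasurableSet (Ω i)) (n : ℕ)
    (hd : ∀ i < n, ∀ j < n, i ≠ j → Disjoint (Ω i) (Ω j)) (x : K) :
    ∑ i ∈ Finset.range n, ‖E.proj (Ω i) x‖ ^ 2 ≤ ‖x‖ ^ 2 := by
  have hmU : MeasurableSet (⋃ i ∈ Finset.range n, Ω i) :=
    (Finset.range n).measurableSet_biUnion (fun i _ => hm i)
  have h1 : ∑ i ∈ Finset.range n, ‖E.proj (Ω i) x‖ ^ 2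
      = (⟪x, E.proj (⋃ i ∈ Finset.range n, Ω i) x⟫_ℂ).re := by
    rw [E.proj_biUnion Ω hm n hd]
    have : ((∑ i ∈ Finset.range n, E.proj (Ω i)) x)
        = ∑ i ∈ Finset.range n, E.proj (Ω i) x := by
      simp
    rw [this, inner_sum, Complex.re_sum]
    exact Finset.sum_congr rfl fun i _ => (E.inner_proj_eq (hm i) x).symm
  rw [h1, E.inner_proj_eq hmU x]
  have := E.norm_proj_apply_le hmU x
  nlinarith [norm_nonneg (E.proj (⋃ i ∈ Finset.range n, Ω i) x), norm_nonneg x]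

/-- The operator norm is dominated by the Hilbert–Schmidt norm. -/
lemma opNorm_sq_le_tsum_hs {ι : Type*} (b : HilbertBasis ι ℂ H) (T : H →L[ℂ] K)
    (hT : Summable fun i => ‖T (b i)‖ ^ 2) :
    ‖T‖ ^ 2 ≤ ∑' i, ‖T (b i)‖ ^ 2 := by
  set S := ∑' i, ‖T (b i)‖ ^ 2 with hS
  have hS0 : 0 ≤ S := tsum_nonneg fun i => sq_nonneg _
  have hnorm : ‖T‖ ≤ Real.sqrt S := by
    refine T.opNorm_le_bound (Real.sqrt_nonneg S) (fun x => ?_)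
    set c : ι → ℂ := fun i => b.repr x i with hc
    have hprod : ∀ i, ⟪x, b i⟫_ℂ * ⟪b i, x⟫_ℂ = ((‖c i‖ ^ 2 : ℝ) : ℂ) := by
      intro i
      rw [← inner_conj_symm (b i) x, Complex.mul_conj]
      norm_cast
      rw [Complex.normSq_eq_norm_sq, hc]
      simp only [b.repr_apply_apply]
      rw [norm_inner_symm]
    have hc2 : Summable fun i => ‖c i‖ ^ 2 := by
      have h1 : Summable fun i => ⟪x, b i⟫_ℂ * ⟪b i, x⟫_ℂ := b.summable_inner_mul_inner x x
      have h2 := h1.map Complex.reCLM Complex.continuous_re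
      refine h2.congr fun i => ?_
      simp only [Function.comp_apply, hprod i]
      norm_cast
    have hc2sum : ∑' i, ‖c i‖ ^ 2 = ‖x‖ ^ 2 := by
      have h1 : ∑' i, ⟪x, b i⟫_ℂ * ⟪b i, x⟫_ℂ = ⟪x, x⟫_ℂ := b.tsum_inner_mul_inner x x
      have h2 : ∑' i, (⟪x, b i⟫_ℂ * ⟪b i, x⟫_ℂ).re = (⟪x, x⟫_ℂ).re := by
        rw [← h1]
        exact (Complex.reCLM.map_tsum (b.summable_inner_mul_inner x x)).symm
      have h3 : ∀ i, (⟪x, b i⟫_ℂ * ⟪b i, x⟫_ℂ).re = ‖c i‖ ^ 2 := fun i => by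
        rw [hprod i]; norm_cast
      rw [← inner_self_eq_norm_sq (𝕜 := ℂ) x,
        show (RCLike.re ⟪x, x⟫_ℂ : ℝ) = (⟪x, x⟫_ℂ).re from rfl, ← h2]
      exact tsum_congr fun i => (h3 i).symm
    have hsum1 : Summable fun i => ‖c i‖ * ‖T (b i)‖ := by
      refine Summable.of_nonneg_of_le (fun i => by positivity)
        (fun i => ?_) ((hc2.add hT).div_const 2)
      have := two_mul_le_add_sq ‖c i‖ ‖T (b i)‖
      linarith
    have hTx : HasSum (fun i => c i • T (b i)) (T x) := by
      have h := (b.hasSum_repr x).mapL T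
      refine h.congr_fun fun i => ?_
      simp [hc]
    have h4 : ‖T x‖ ≤ ∑' i, ‖c i‖ * ‖T (b i)‖ := by
      rw [← hTx.tsum_eq]
      refine (norm_tsum_le_tsum_norm ?_).trans (le_of_eq (tsum_congr fun i => norm_smul _ _))
      exact hsum1.congr fun i => (norm_smul (c i) (T (b i))).symm
    have h5 : ∑' i, ‖c i‖ * ‖T (b i)‖ ≤ Real.sqrt S * ‖x‖ := by
      refine Summable.tsum_le_of_sum_le hsum1 fun s => ?_
      calc ∑ i ∈ s, ‖c i‖ * ‖T (b i)‖
          ≤ Real.sqrt (∑ i ∈ s, ‖c i‖ ^ 2) * Real.sqrt (∑ i ∈ s, ‖T (b i)‖ ^ 2) :=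
            Real.sum_mul_le_sqrt_mul_sqrt s _ _
        _ ≤ Real.sqrt (‖x‖ ^ 2) * Real.sqrt S := by
            gcongr
            · rw [← hc2sum]
              exact Summable.sum_le_tsum s (fun i _ => sq_nonneg _) hc2
            · exact Summable.sum_le_tsum s (fun i _ => sq_nonneg _) hT
        _ = Real.sqrt S * ‖x‖ := by
            rw [Real.sqrt_sq (norm_nonneg x)]; ring
    exact h4.trans h5
  calc ‖T‖ ^ 2 ≤ Real.sqrt S ^ 2 := by
        exact pow_le_pow_left₀ (norm_nonneg T) hnorm 2
    _ = S := Real.sq_sqrt hS0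

end AuxEnorm

/-- for a Hilbert–Schmidt operator `Y` (w.r.t. a Hilbert basis `b`),
the `E`-norm of `Y` is finite and bounded by the Hilbert–Schmidt norm
`‖Y‖₂ = (Σ_i ‖Y b_i‖²)^{1/2}`. -/
theorem Enorm_le_hilbertSchmidt (E : SpectralMeasure K) (Y : H →L[ℂ] K)
    {ι : Type*} (b : HilbertBasis ι ℂ H) (hHS : Summable fun i => ‖Y (b i)‖ ^ 2) :
    BddAbove (EnormSet E Y) ∧ Enorm E Y ≤ Real.sqrt (∑' i, ‖Y (b i)‖ ^ 2) := by
  set S := ∑' i, ‖Y (b i)‖ ^ 2 with hS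
  have hS0 : 0 ≤ S := tsum_nonneg fun i => sq_nonneg _
  have key : ∀ r ∈ EnormSet E Y, r ≤ S := by
    rintro r ⟨n, Ω, hm, hd, rfl⟩
    -- each summand equals ‖E(Ω i) ∘ Y‖²
    have hterm : ∀ i, ‖(ContinuousLinearMap.adjoint Y).comp ((E.proj (Ω i)).comp Y)‖
        = ‖(E.proj (Ω i)).comp Y‖ ^ 2 := by
      intro i
      have hsa : ContinuousLinearMap.adjoint (E.proj (Ω i)) = E.proj (Ω i) :=
        ContinuousLinearMap.isSelfAdjoint_iff'.mp (E.selfAdjoint (hm i))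
      have heq : (ContinuousLinearMap.adjoint Y).comp ((E.proj (Ω i)).comp Y)
          = (ContinuousLinearMap.adjoint ((E.proj (Ω i)).comp Y)).comp
              ((E.proj (Ω i)).comp Y) := by
        rw [ContinuousLinearMap.adjoint_comp, hsa]
        rw [ContinuousLinearMap.comp_assoc, ← ContinuousLinearMap.comp_assoc (E.proj (Ω i)),
          E.proj_idem' (hm i)]
      rw [heq, ContinuousLinearMap.norm_adjoint_comp_self, sq]
    -- summability of each HS column
    have hsummable : ∀ i, Summable fun j => ‖((E.proj (Ω i)).comp Y) (b j)‖ ^ 2 := by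
      intro i
      refine Summable.of_nonneg_of_le (fun j => sq_nonneg _) (fun j => ?_) hHS
      have := E.norm_proj_apply_le (hm i) (Y (b j))
      have h0 : (0:ℝ) ≤ ‖((E.proj (Ω i)).comp Y) (b j)‖ := norm_nonneg _
      simpa [ContinuousLinearMap.comp_apply] using
        pow_le_pow_left₀ h0 (by simpa [ContinuousLinearMap.comp_apply] using this) 2
    have hstep : ∀ i, ‖(E.proj (Ω i)).comp Y‖ ^ 2
        ≤ ∑' j, ‖((E.proj (Ω i)).comp Y) (b j)‖ ^ 2 :=
      fun i => opNorm_sq_le_tsum_hs b _ (hsummable i)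
    calc ∑ i ∈ Finset.range n,
          ‖(ContinuousLinearMap.adjoint Y).comp ((E.proj (Ω i)).comp Y)‖
        = ∑ i ∈ Finset.range n, ‖(E.proj (Ω i)).comp Y‖ ^ 2 :=
          Finset.sum_congr rfl fun i _ => hterm i
      _ ≤ ∑ i ∈ Finset.range n, ∑' j, ‖((E.proj (Ω i)).comp Y) (b j)‖ ^ 2 :=
          Finset.sum_le_sum fun i _ => hstep i
      _ = ∑' j, ∑ i ∈ Finset.range n, ‖((E.proj (Ω i)).comp Y) (b j)‖ ^ 2 :=
          (Summable.tsum_finsetSum fun i _ => hsummable i).symm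
      _ ≤ ∑' j, ‖Y (b j)‖ ^ 2 := by
          refine Summable.tsum_le_tsum (fun j => ?_) ?_ hHS
          · simpa [ContinuousLinearMap.comp_apply] using
              E.sum_norm_proj_sq_le Ω hm n hd (Y (b j))
          · refine Summable.of_nonneg_of_le
              (fun j => Finset.sum_nonneg fun i _ => sq_nonneg _) (fun j => ?_) hHS
            simpa [ContinuousLinearMap.comp_apply] using
              E.sum_norm_proj_sq_le Ω hm n hd (Y (b j))
  refine ⟨⟨S, fun r hr => key r hr⟩, ?_⟩
  rw [Enorm]
  exact Real.sqrt_le_sqrt (Real.sSup_le key hS0)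

end
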